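/- Let H be a graph whose vertex set is partitioned into k color classes S_1, ..., S_k, each inducing a clique, and let G' be obtained from H by adding k new vertices u_1, ..., u_k where u_i is adjacent exactly to the vertices of S_i. Then G' has a set of 2k vertices in general position in the P3 convexity if and only if H has an independent set containing exactly one vertex of each S_i. -/
import Mathlib

def p3Interval {V : Type*} (G : SimpleGraph V) (S : Set V) : Set V :=
  S ∪ {v | ∃ a ∈ S, ∃ b ∈ S, a ≠ b ∧ G.Adj v a ∧ G.Adj v b}

def p3GenPos {V : Type*} (G : SimpleGraph V) (S : Set V) : Prop :=
  ∀ x ∈ S, ∀ y ∈ S, ∀ z ∈ S, x ≠ y → z ≠ x → z ≠ y → z ∉ p3Interval G {x, y}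

/-- The graph `G'` of the multicolored-independent-set reduction: `H` together with
new vertices `u_i` (`Sum.inr i`), where `u_i` is adjacent exactly to the color class
`S_i = c⁻¹(i)`. -/
def gadget {V : Type*} (H : SimpleGraph V) (k : ℕ) (c : V → Fin k) :
    SimpleGraph (V ⊕ Fin k) :=
  SimpleGraph.fromRel (fun a b =>
    (∃ u v : V, a = Sum.inl u ∧ b = Sum.inl v ∧ H.Adj u v) ∨
    (∃ (i : Fin k) (v : V), a = Sum.inr i ∧ b = Sum.inl v ∧ c v = i))

section Aux

variable {V : Type*} {H : SimpleGraph V} {k : ℕ} {c : V → Fin k}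

lemma gadget_inl_inl {u v : V} : (gadget H k c).Adj (Sum.inl u) (Sum.inl v) ↔ H.Adj u v := by
  constructor
  · rintro ⟨hne, h | h⟩ <;> rcases h with (⟨a,b,ha,hb,hadj⟩|⟨i,w,hi,_,_⟩) <;>
      simp_all <;> exact hadj.symm
  · intro h
    exact ⟨by simp [h.ne], Or.inl (Or.inl ⟨u, v, rfl, rfl, h⟩)⟩

lemma gadget_inr_inl {i : Fin k} {v : V} :
    (gadget H k c).Adj (Sum.inr i) (Sum.inl v) ↔ c v = i := by
  constructor
  · rintro ⟨hne, h | h⟩ <;> rcases h with (⟨a,b,ha,hb,hadj⟩|⟨j,w,hj,hw,hc⟩) <;> simp_all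
  · intro h
    exact ⟨by simp, Or.inl (Or.inr ⟨i, v, rfl, rfl, h⟩)⟩

lemma gadget_inr_inr {i j : Fin k} : ¬ (gadget H k c).Adj (Sum.inr i) (Sum.inr j) := by
  rintro ⟨hne, h | h⟩ <;> rcases h with (⟨a,b,ha,hb,hadj⟩|⟨l,w,hl,hw,hc⟩) <;> simp_all

lemma genpos_iff {W : Type*} {G : SimpleGraph W} {S : Set W} :
    p3GenPos G S ↔ ∀ z ∈ S, ∀ x ∈ S, ∀ y ∈ S, x ≠ y → z ≠ x → z ≠ y →
      ¬(G.Adj z x ∧ G.Adj z y) := by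
  constructor
  · intro h z hz x hx y hy hxy hzx hzy ⟨h1, h2⟩
    exact h x hx y hy z hz hxy hzx hzy
      (Or.inr ⟨x, by simp, y, by simp, hxy, h1, h2⟩)
  · intro h x hx y hy z hz hxy hzx hzy hmem
    rcases hmem with hmem | ⟨a, ha, b, hb, hab, h1, h2⟩
    · rcases hmem with rfl | rfl
      · exact hzx rfl
      · exact hzy rfl
    · simp only [Set.mem_insert_iff, Set.mem_singleton_iff] at ha hb
      rcases ha with ha | ha <;> rcases hb with hb | hb
      · exact hab (ha.trans hb.symm)
      · exact h z hz x hx y hy hxy hzx hzy ⟨ha ▸ h1, hb ▸ h2⟩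
      · exact h z hz x hx y hy hxy hzx hzy ⟨hb ▸ h2, ha ▸ h1⟩
      · exact hab (ha.trans hb.symm)

end Aux

theorem stmt15 {V : Type*} [Fintype V] (H : SimpleGraph V) (k : ℕ) (c : V → Fin k)
    (hclique : ∀ u v : V, c u = c v → u ≠ v → H.Adj u v) :
    (∃ S : Set (V ⊕ Fin k), p3GenPos (gadget H k c) S ∧ S.ncard = 2 * k) ↔
    (∃ f : Fin k → V, (∀ i, c (f i) = i) ∧
      ∀ i j, i ≠ j → ¬ H.Adj (f i) (f j)) := by
  classical
  have hcl : ∀ a b : V ⊕ Fin k, Sum.elim c id a = Sum.elim c id b → a ≠ b →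
      (gadget H k c).Adj a b := by
    rintro (u | i) (v | j) hc hne
    · exact gadget_inl_inl.mpr (hclique u v hc (by rintro rfl; exact hne rfl))
    · simp only [Sum.elim_inl, Sum.elim_inr, id] at hc
      exact (gadget_inr_inl.mpr hc).symm
    · simp only [Sum.elim_inl, Sum.elim_inr, id] at hc
      exact gadget_inr_inl.mpr hc.symm
    · simp only [Sum.elim_inr, id] at hc
      exact absurd (by rw [hc]) hne
  constructor
  · rintro ⟨S, hgp, hcard⟩
    rw [genpos_iff] at hgp
    have hSfin : S.Finite := Set.toFinite S
    set T := hSfin.toFinset with hTdef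
    have hTS : ∀ a, a ∈ T ↔ a ∈ S := fun a => hSfin.mem_toFinset
    have hTcard : T.card = 2 * k := by
      rw [hTdef, ← Set.ncard_eq_toFinset_card _ hSfin, hcard]
    -- each fiber of the coloring has at most 2 elements of T
    have hfib : ∀ i : Fin k, (T.filter (fun a => Sum.elim c id a = i)).card ≤ 2 := by
      intro i
      by_contra hlt
      push_neg at hlt
      obtain ⟨a, b, d, ha, hb, hd, hab, had, hbd⟩ := Finset.two_lt_card_iff.mp hlt
      simp only [Finset.mem_filter] at ha hb hd
      exact hgp d ((hTS d).mp hd.1) a ((hTS a).mp ha.1) b ((hTS b).mp hb.1)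
        hab had.symm hbd.symm
        ⟨hcl d a (hd.2.trans ha.2.symm) (Ne.symm had),
         hcl d b (hd.2.trans hb.2.symm) (Ne.symm hbd)⟩
    have hsum : ∑ i : Fin k, (T.filter (fun a => Sum.elim c id a = i)).card = 2 * k := by
      rw [← Finset.card_eq_sum_card_fiberwise (fun x _ => Finset.mem_univ (Sum.elim c id x)),
        hTcard]
    have heq : ∀ i : Fin k, (T.filter (fun a => Sum.elim c id a = i)).card = 2 := by
      have h2 : ∑ _i : Fin k, 2 = 2 * k := by
        simp [Finset.sum_const, mul_comm]
      intro i
      exact (Finset.sum_eq_sum_iff_of_le (fun i _ => hfib i)).mp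
        (hsum.trans h2.symm) i (Finset.mem_univ i)
    -- each fiber contains an inl element
    have hinl : ∀ i : Fin k, ∃ v : V, Sum.inl v ∈ T ∧ c v = i := by
      intro i
      by_contra hno
      push_neg at hno
      have hsub : (T.filter (fun a => Sum.elim c id a = i)) ⊆ {Sum.inr i} := by
        intro a ha
        simp only [Finset.mem_filter] at ha
        rcases a with v | j
        · exact absurd ha.2 (hno v ha.1)
        · simp only [Sum.elim_inr, id] at ha
          simp [ha.2]
      have := Finset.card_le_card hsub
      rw [heq i, Finset.card_singleton] at this
      omega
    choose f hfT hfc using hinl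
    refine ⟨f, hfc, ?_⟩
    intro i j hij hadj
    -- inl (f i) has a partner in its fiber
    have hmem : Sum.inl (f i) ∈ T.filter (fun a => Sum.elim c id a = i) := by
      simp only [Finset.mem_filter, Sum.elim_inl]
      exact ⟨hfT i, hfc i⟩
    have h1 : 1 < (T.filter (fun a => Sum.elim c id a = i)).card := by rw [heq i]; omega
    obtain ⟨w, hw, hwne⟩ := Finset.exists_mem_ne h1 (Sum.inl (f i))
    simp only [Finset.mem_filter] at hw
    have hfij : f i ≠ f j := fun h => hij (by rw [← hfc i, ← hfc j, h])
    refine hgp (Sum.inl (f i)) ((hTS _).mp (hfT i)) w ((hTS w).mp hw.1)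
      (Sum.inl (f j)) ((hTS _).mp (hfT j)) ?_ (Ne.symm hwne) (by simpa using hfij)
      ⟨hcl _ w (by simp [hfc i, hw.2]) hwne.symm, gadget_inl_inl.mpr hadj⟩
    intro h
    rw [h] at hw
    simp only [Sum.elim_inl] at hw
    exact hij (hw.2.symm.trans (hfc j))
  · rintro ⟨f, hfc, hind⟩
    have hfinj : Function.Injective f := fun i j h => by
      rw [← hfc i, ← hfc j, h]
    refine ⟨Set.range (fun i => (Sum.inl (f i) : V ⊕ Fin k)) ∪ Set.range Sum.inr, ?_, ?_⟩
    · rw [genpos_iff]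
      rintro z hz x hx y hy hxy hzx hzy ⟨h1, h2⟩
      -- any vertex has at most one neighbor in the set
      have key : ∀ w a, w ∈ (Set.range (fun i => (Sum.inl (f i) : V ⊕ Fin k)) ∪ Set.range Sum.inr) →
          a ∈ (Set.range (fun i => (Sum.inl (f i) : V ⊕ Fin k)) ∪ Set.range Sum.inr) →
          (gadget H k c).Adj w a →
          ∃ i : Fin k, (w = Sum.inl (f i) ∧ a = Sum.inr i) ∨ (w = Sum.inr i ∧ a = Sum.inl (f i)) := by
        rintro w a (⟨i, rfl⟩ | ⟨i, rfl⟩) (⟨j, rfl⟩ | ⟨j, rfl⟩) hadj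
        · have := gadget_inl_inl.mp hadj
          rcases eq_or_ne i j with rfl | hij
          · exact absurd this (H.irrefl)
          · exact absurd this (hind i j hij)
        · have := gadget_inr_inl.mp hadj.symm
          rw [hfc i] at this
          exact ⟨i, Or.inl ⟨rfl, by rw [this]⟩⟩
        · have := gadget_inr_inl.mp hadj
          rw [hfc j] at this
          exact ⟨i, Or.inr ⟨rfl, by rw [← this]⟩⟩
        · exact absurd hadj gadget_inr_inr
      obtain ⟨i, hi⟩ := key z x hz hx h1
      obtain ⟨j, hj⟩ := key z y hz hy h2
      rcases hi with ⟨hzi, hxi⟩ | ⟨hzi, hxi⟩ <;> rcases hj with ⟨hzj, hyj⟩ | ⟨hzj, hyj⟩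
      · rw [hzi] at hzj
        have : i = j := hfinj (by injection hzj)
        exact hxy (hxi.trans (this ▸ hyj.symm))
      · rw [hzi] at hzj; exact absurd hzj (by simp)
      · rw [hzi] at hzj; exact absurd hzj (by simp)
      · rw [hzi] at hzj
        have : i = j := by injection hzj
        exact hxy (hxi.trans (this ▸ hyj.symm))
    · rw [Set.ncard_union_eq]
      · rw [← Nat.card_coe_set_eq, ← Nat.card_coe_set_eq,
          Nat.card_range_of_injective (f := fun i => (Sum.inl (f i) : V ⊕ Fin k))
            (fun a b h => hfinj (by injection h)),
          Nat.card_range_of_injective Sum.inr_injective]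
        simp [two_mul]
      · rw [Set.disjoint_left]
        rintro a ⟨i, rfl⟩ ⟨j, hj⟩
        exact Sum.inl_ne_inr hj.symm
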